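/- Let O be the origin of ℝ^(k+1), x fixed with |x| = r < R, y ∈ S^k(R), ψ = ∠Oxy, and θ = π − ∠xOy. With q = |x−y| and l = |x−y*| as above, the change of variables between θ and ψ satisfies dθ/dψ = 2q/(l+q); equivalently r sin ψ = R sin(θ − ψ) implicitly defines θ(ψ), and differentiating gives dθ = (2q/(l+q)) dψ. -/

import Mathlib

open Real

/-- θ–ψ exchange: with `0 < r < R`, the relation `r sin ψ = R sin(θ(ψ) − ψ)` (with
`θ(ψ) − ψ ∈ [−π/2, π/2]`) implicitly defines `θ(ψ)`, and differentiating gives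
`dθ/dψ = 2q/(l+q)`, where `q(ψ) = r cos ψ + √(R² − r² sin² ψ)` and
`l(ψ) = √(R² − r² sin² ψ) − r cos ψ` are the chord distances `‖x−y‖`, `‖x−y*‖`. -/
theorem stmt7 (r R : ℝ) (hr : 0 < r) (hrR : r < R) (θ : ℝ → ℝ)
    (hθ : ∀ ψ ∈ Set.Icc 0 π, r * Real.sin ψ = R * Real.sin (θ ψ - ψ))
    (hθ' : ∀ ψ ∈ Set.Icc 0 π, θ ψ - ψ ∈ Set.Icc (-(π/2)) (π/2))
    (hθd : ∀ ψ ∈ Set.Ioo 0 π, DifferentiableAt ℝ θ ψ) :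
    ∀ ψ ∈ Set.Ioo 0 π,
      let q : ℝ := r * Real.cos ψ + Real.sqrt (R^2 - r^2 * Real.sin ψ^2)
      let l : ℝ := Real.sqrt (R^2 - r^2 * Real.sin ψ^2) - r * Real.cos ψ
      HasDerivAt θ (2 * q / (l + q)) ψ := by
  intro ψ hψ q l
  have hR : (0:ℝ) < R := hr.trans hrR
  -- θ agrees with the explicit function t ↦ t + arcsin (r sin t / R) on [0, π]
  have key : ∀ t ∈ Set.Icc 0 π, θ t = t + Real.arcsin (r * Real.sin t / R) := by
    intro t ht
    have h1 := hθ t ht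
    have h2 := hθ' t ht
    have hsin : Real.sin (θ t - t) = r * Real.sin t / R := by
      field_simp
      linarith [h1]
    have := Real.arcsin_sin h2.1 h2.2
    rw [hsin] at this
    linarith [this]
  -- positivity of R² − r² sin² t
  have hpos : ∀ t : ℝ, 0 < R^2 - r^2 * Real.sin t^2 := by
    intro t
    have h1 : r^2 * Real.sin t^2 ≤ r^2 := by
      nlinarith [Real.sin_sq_le_one t]
    nlinarith
  set s : ℝ := Real.sqrt (R^2 - r^2 * Real.sin ψ^2) with hs_def
  have hs : 0 < s := Real.sqrt_pos.mpr (hpos ψ)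
  -- bounds on r sin ψ / R
  have habs : |r * Real.sin ψ / R| < 1 := by
    rw [abs_div, abs_of_pos hR, div_lt_one hR, abs_mul, abs_of_pos hr]
    calc r * |Real.sin ψ| ≤ r * 1 := by
          have := Real.abs_sin_le_one ψ
          nlinarith
      _ < R := by linarith
  have hne1 : r * Real.sin ψ / R ≠ 1 := fun h => by simp [h] at habs
  have hnem1 : r * Real.sin ψ / R ≠ -1 := fun h => by simp [h] at habs
  -- derivative of the explicit function
  have hinner : HasDerivAt (fun t => r * Real.sin t / R) (r * Real.cos ψ / R) ψ :=
    ((Real.hasDerivAt_sin ψ).const_mul r).div_const R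
  have harcsin := (Real.hasDerivAt_arcsin hnem1 hne1).comp ψ hinner
  have hD : HasDerivAt (fun t => t + Real.arcsin (r * Real.sin t / R))
      (1 + 1 / Real.sqrt (1 - (r * Real.sin ψ / R)^2) * (r * Real.cos ψ / R)) ψ :=
    (hasDerivAt_id ψ).add harcsin
  -- compute the sqrt
  have hsq : Real.sqrt (1 - (r * Real.sin ψ / R)^2) = s / R := by
    have h1 : 1 - (r * Real.sin ψ / R)^2 = (R^2 - r^2 * Real.sin ψ^2) / R^2 := by
      field_simp
    rw [h1, ← hs_def.symm]
    rw [show (R:ℝ)^2 = R * R by ring] at *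
    rw [Real.sqrt_div (by nlinarith [hpos ψ]) (R * R), Real.sqrt_mul_self hR.le]
  -- identify the derivative value
  have hval : 1 + 1 / Real.sqrt (1 - (r * Real.sin ψ / R)^2) * (r * Real.cos ψ / R)
      = 2 * q / (l + q) := by
    rw [hsq]
    show _ = 2 * (r * Real.cos ψ + s) / ((s - r * Real.cos ψ) + (r * Real.cos ψ + s))
    field_simp [hs.ne', hR.ne']
    linear_combination (-(r * Real.cos ψ + s)) * mul_inv_cancel₀ hs.ne'
  rw [← hval]
  refine hD.congr_of_eventuallyEq ?_
  filter_upwards [isOpen_Ioo.mem_nhds hψ] with t ht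
  exact key t (Set.mem_Icc_of_Ioo ht)
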